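/- For every positive integer $n$, $\sum_{k \in \mathbb{Z}} (-1)^k p(n - \omega(k)) = 0$, where the sum is over all integers $k$ with $\omega(k) \le n$. -/

import Mathlib

/-- The partition function `p(n)`. -/
def p (n : ℕ) : ℕ := Fintype.card (Nat.Partition n)

/-- `p` extended to the integers by `0` on negative arguments. -/
def pZ (m : ℤ) : ℤ := if 0 ≤ m then p m.toNat else 0

/-- The pentagonal number `ω(k) = (3k² + k)/2`. -/
def pent (k : ℤ) : ℤ := (3 * k ^ 2 + k) / 2

namespace ER


lemma two_pent (k : ℤ) : 2 * pent k = 3 * k ^ 2 + k := by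
  obtain ⟨m, hm⟩ : Even (3 * k ^ 2 + k) := by
    rcases Int.even_or_odd k with ⟨c, hc⟩ | ⟨c, hc⟩
    · exact ⟨3*c*k + c, by subst hc; ring⟩
    · exact ⟨6*c^2 + 7*c + 2, by subst hc; ring⟩
  rw [pent, hm, ← two_mul, Int.mul_ediv_cancel_left _ two_ne_zero]

lemma pent_nonneg (k : ℤ) : 0 ≤ pent k := by
  have h := two_pent k
  nlinarith [sq_nonneg k, sq_nonneg (k+1), sq_nonneg (3*k+1)]

lemma pent_inj {a b : ℤ} (h : pent a = pent b) : a = b := by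
  have h2 : 3 * a ^ 2 + a = 3 * b ^ 2 + b := by
    have := two_pent a; have := two_pent b; omega
  have : (a - b) * (3 * (a + b) + 1) = 0 := by ring_nf; nlinarith [h2]
  rcases mul_eq_zero.1 this with h | h
  · omega
  · omega

lemma natAbs_le_pent (k : ℤ) : (k.natAbs : ℤ) ≤ pent k := by
  have h := two_pent k
  rcases le_or_gt 0 k with hk | hk
  · rw [Int.natAbs_of_nonneg hk]; nlinarith [sq_nonneg k]
  · have : (k.natAbs : ℤ) = -k := by omega
    rw [this]; nlinarith [sq_nonneg (k+1)]



def fmax (D : Finset ℕ) : ℕ := WithBot.unbotD 0 D.max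
def fmin (D : Finset ℕ) : ℕ := WithTop.untopD 0 D.min

lemma fmax_mem {D : Finset ℕ} (h : D.Nonempty) : fmax D ∈ D := by
  rw [fmax, ← Finset.coe_max' h, WithBot.unbotD_coe]
  exact Finset.max'_mem _ _

lemma le_fmax {D : Finset ℕ} {x : ℕ} (h : x ∈ D) : x ≤ fmax D := by
  rw [fmax, ← Finset.coe_max' ⟨x, h⟩, WithBot.unbotD_coe]
  exact Finset.le_max' _ _ h

lemma fmax_eq {D : Finset ℕ} {a : ℕ} (h : a ∈ D) (h2 : ∀ x ∈ D, x ≤ a) : fmax D = a :=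
  le_antisymm (h2 _ (fmax_mem ⟨a, h⟩)) (le_fmax h)

lemma fmin_mem {D : Finset ℕ} (h : D.Nonempty) : fmin D ∈ D := by
  rw [fmin, ← Finset.coe_min' h, WithTop.untopD_coe]
  exact Finset.min'_mem _ _

lemma fmin_le {D : Finset ℕ} {x : ℕ} (h : x ∈ D) : fmin D ≤ x := by
  rw [fmin, ← Finset.coe_min' ⟨x, h⟩, WithTop.untopD_coe]
  exact Finset.min'_le _ _ h

lemma fmin_eq {D : Finset ℕ} {a : ℕ} (h : a ∈ D) (h2 : ∀ x ∈ D, a ≤ x) : fmin D = a :=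
  le_antisymm (fmin_le h) (h2 _ (fmin_mem ⟨a, h⟩))

def gap (D : Finset ℕ) : ℕ := (((Finset.range (fmax D + 1)).filter (fun x => x ∉ D))).max.unbotD 0

lemma gap_spec {D : Finset ℕ} (hne : D.Nonempty) (h0 : 0 ∉ D) :
    gap D ∉ D ∧ gap D < fmax D ∧ ∀ x, gap D < x → x ≤ fmax D → x ∈ D := by
  set E := (Finset.range (fmax D + 1)).filter (fun x => x ∉ D) with hE
  have hEne : E.Nonempty := ⟨0, by simp [hE, h0]⟩
  have hgm : gap D ∈ E := by
    rw [gap, ← hE, ← Finset.coe_max' hEne, WithBot.unbotD_coe]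
    exact Finset.max'_mem _ _
  have hg1 : gap D ∉ D := (Finset.mem_filter.1 hgm).2
  have hg0 : gap D < fmax D + 1 := Finset.mem_range.1 (Finset.mem_filter.1 hgm).1
  have hgne : gap D ≠ fmax D := fun h => hg1 (h ▸ fmax_mem hne)
  refine ⟨hg1, by omega, fun x hx1 hx2 => ?_⟩
  by_contra hxD
  have : x ∈ E := Finset.mem_filter.2 ⟨Finset.mem_range.2 (by omega), hxD⟩
  have : x ≤ gap D := by
    rw [gap, ← hE, ← Finset.coe_max' hEne, WithBot.unbotD_coe]
    exact Finset.le_max' _ _ this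
  omega

lemma gap_eq {D : Finset ℕ} {g : ℕ} (hne : D.Nonempty) (h0 : 0 ∉ D)
    (hg : g ∉ D) (hlt : g < fmax D) (hall : ∀ x, g < x → x ≤ fmax D → x ∈ D) : gap D = g := by
  obtain ⟨h1, h2, h3⟩ := gap_spec hne h0
  rcases lt_trichotomy (gap D) g with h | h | h
  · exact absurd (h3 g h (by omega)) hg
  · exact h
  · exact absurd (hall _ h (by omega)) h1



def staircase (k : ℤ) : Finset ℕ :=
  if 0 ≤ k then Finset.Icc (k.toNat + 1) (2 * k.toNat) else Finset.Icc k.natAbs (2 * k.natAbs - 1)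

lemma sum_Icc_twice (u v : ℕ) : 2 * (∑ x ∈ Finset.Icc u v, x) + u * (u - 1) = v * (v + 1) ∨ v + 1 < u := by
  rcases le_or_gt u (v+1) with h | h
  · left
    induction v with
    | zero =>
      interval_cases u <;> simp
    | succ v ih =>
      rcases le_or_gt u (v+1) with h2 | h2
      · rw [Finset.sum_Icc_succ_top h2]
        have := ih h2; ring_nf; ring_nf at this; omega
      · have : u = v + 2 := by omega
        subst this
        simp only [show Finset.Icc (v+2) (v+1) = ∅ from Finset.Icc_eq_empty (by omega), Finset.sum_empty]
        have e : v + 2 - 1 = v + 1 := by omega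
        rw [e]; ring
  · right; exact h

lemma sum_Icc_eq (u v : ℕ) (h : u ≤ v + 1) : 2 * (∑ x ∈ Finset.Icc u v, x) + u * (u-1) = v * (v+1) := by
  rcases sum_Icc_twice u v with h2 | h2
  · exact h2
  · omega

lemma staircase_sum (k : ℤ) : (((staircase k).sum id : ℕ) : ℤ) = pent k := by
  have h2 := two_pent k
  rw [staircase]
  split_ifs with hk
  · set m := k.toNat with hm
    have hkm : (m : ℤ) = k := Int.toNat_of_nonneg hk
    set S := (Finset.Icc (m+1) (2*m)).sum id with hS
    have h3 : 2 * S + (m+1) * ((m+1) - 1) = (2*m) * (2*m+1) := sum_Icc_eq (m+1) (2*m) (by omega)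
    have h4 : 2 * S + (m+1) * m = (2*m) * (2*m+1) := by simpa using h3
    have hz : 2 * (S:ℤ) + ((m:ℤ)+1) * m = (2*(m:ℤ)) * (2*(m:ℤ)+1) := by exact_mod_cast h4
    rw [hkm] at hz
    have : 2 * (S:ℤ) = 2 * pent k := by linear_combination hz - h2
    omega
  · have hm1 : 1 ≤ k.natAbs := by omega
    obtain ⟨w, hw⟩ : ∃ w, k.natAbs = w + 1 := ⟨k.natAbs - 1, by omega⟩
    rw [hw, show 2*(w+1)-1 = 2*w+1 from by omega]
    have h3 := sum_Icc_eq (w+1) (2*(w+1)-1) (by omega)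
    rw [show 2*(w+1)-1 = 2*w+1 from by omega] at h3
    set S := (Finset.Icc (w+1) (2*w+1)).sum id with hS
    have h4 : 2 * S + (w+1) * w = (2*w+1) * (2*w+2) := by
      have e : S = ∑ x ∈ Finset.Icc (w+1) (2*w+1), x := rfl
      rw [Nat.add_sub_cancel] at h3
      rw [e]; linarith [h3]
    have hz : 2 * (S:ℤ) + ((w:ℤ)+1) * w = (2*(w:ℤ)+1) * (2*(w:ℤ)+2) := by exact_mod_cast h4
    have hk2 : k = -((w:ℤ)+1) := by omega
    rw [hk2] at h2 ⊢
    have : 2 * (S:ℤ) = 2 * pent (-((w:ℤ)+1)) := by linear_combination hz - h2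
    omega

lemma staircase_card (k : ℤ) : (staircase k).card = k.natAbs := by
  rw [staircase]; split_ifs with hk <;> rw [Nat.card_Icc] <;> omega

lemma staircase_pos {k : ℤ} {x : ℕ} (h : x ∈ staircase k) : 0 < x := by
  rw [staircase] at h
  split_ifs at h <;> (rw [Finset.mem_Icc] at h; omega)

lemma staircase_shape (k : ℤ) (hk : k ≠ 0) :
    ∃ u v : ℕ, staircase k = Finset.Icc u v ∧ 1 ≤ u ∧ v + 1 = u + k.natAbs ∧
      k.natAbs ≤ u ∧ u ≤ k.natAbs + 1 := by
  rw [staircase]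
  split_ifs with h
  · exact ⟨k.toNat + 1, 2 * k.toNat, rfl, by omega, by omega, by omega, by omega⟩
  · exact ⟨k.natAbs, 2 * k.natAbs - 1, rfl, by omega, by omega, by omega, by omega⟩



def mmax (μ : Multiset ℕ) : ℕ := fmax μ.toFinset

lemma mmax_mem {μ : Multiset ℕ} (h : μ ≠ 0) : mmax μ ∈ μ := by
  have : μ.toFinset.Nonempty := by
    obtain ⟨x, hx⟩ := Multiset.exists_mem_of_ne_zero h
    exact ⟨x, Multiset.mem_toFinset.2 hx⟩
  exact Multiset.mem_toFinset.1 (fmax_mem this)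

lemma le_mmax {μ : Multiset ℕ} {x : ℕ} (h : x ∈ μ) : x ≤ mmax μ :=
  le_fmax (Multiset.mem_toFinset.2 h)

def DD (n : ℕ) : Finset (Finset ℕ) :=
  ((Finset.range (n+1)).powerset).filter (fun D => (∀ x ∈ D, 0 < x) ∧ D.sum id ≤ n)

lemma mem_DD {n : ℕ} {D : Finset ℕ} : D ∈ DD n ↔ (∀ x ∈ D, 0 < x) ∧ D.sum id ≤ n := by
  rw [DD, Finset.mem_filter, Finset.mem_powerset, and_iff_right_iff_imp]
  rintro ⟨hpos, hsum⟩ x hx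
  have : x ≤ D.sum id := Finset.single_le_sum (fun i _ => Nat.zero_le (id i)) hx
  exact Finset.mem_range.2 (by omega)

def Lam (m : ℕ) : Finset (Multiset ℕ) := Finset.univ.image (fun q : Nat.Partition m => q.parts)

lemma card_Lam (m : ℕ) : (Lam m).card = p m := by
  rw [Lam, Finset.card_image_of_injective _ (fun a b h => Nat.Partition.ext h), Finset.card_univ, p]

lemma mem_Lam {m : ℕ} {μ : Multiset ℕ} : μ ∈ Lam m ↔ (∀ x ∈ μ, 0 < x) ∧ μ.sum = m := by
  constructor
  · rw [Lam, Finset.mem_image]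
    rintro ⟨q, -, rfl⟩
    exact ⟨fun x hx => q.parts_pos hx, q.parts_sum⟩
  · rintro ⟨h1, h2⟩
    exact Finset.mem_image.2 ⟨⟨μ, fun hi => h1 _ hi, h2⟩, Finset.mem_univ _, rfl⟩

lemma fmax_le {D : Finset ℕ} {c : ℕ} (h : ∀ x ∈ D, x ≤ c) : fmax D ≤ c := by
  rcases Finset.eq_empty_or_nonempty D with rfl | hne
  · simp [fmax]
  · exact h _ (fmax_mem hne)

lemma mmax_le {μ : Multiset ℕ} {c : ℕ} (h : ∀ x ∈ μ, x ≤ c) : mmax μ ≤ c := by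
  rcases eq_or_ne μ 0 with rfl | hne
  · simp [mmax, fmax]
  · exact h _ (mmax_mem hne)

theorem easy_involution (n : ℕ) (hn : 1 ≤ n) :
    ∑ D ∈ DD n, (-1 : ℤ) ^ D.card * (p (n - D.sum id) : ℤ) = 0 := by
  have hrw : ∀ D ∈ DD n, (-1 : ℤ) ^ D.card * (p (n - D.sum id) : ℤ)
      = ∑ μ ∈ Lam (n - D.sum id), (-1 : ℤ) ^ D.card := by
    intro D _
    rw [Finset.sum_const, card_Lam, nsmul_eq_mul, mul_comm]
  rw [Finset.sum_congr rfl hrw, Finset.sum_sigma']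
  set S := (DD n).sigma (fun D => Lam (n - D.sum id)) with hS
  have memS : ∀ x : (_ : Finset ℕ) × Multiset ℕ, x ∈ S ↔
      ((∀ y ∈ x.1, 0 < y) ∧ (∀ y ∈ x.2, 0 < y) ∧ x.1.sum id + x.2.sum = n) := by
    rintro ⟨D, μ⟩
    rw [hS, Finset.mem_sigma, mem_DD, mem_Lam]
    constructor
    · rintro ⟨⟨h1, h2⟩, h3, h4⟩; exact ⟨h1, h3, by omega⟩
    · rintro ⟨h1, h2, h3⟩; exact ⟨⟨h1, by omega⟩, h2, by omega⟩
  -- key facts per element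
  have key : ∀ x ∈ S,
      (mmax x.2 ≤ fmax x.1 → x.1.Nonempty ∧ fmax x.1 ∈ x.1 ∧ 0 < fmax x.1) ∧
      (fmax x.1 < mmax x.2 → mmax x.2 ∈ x.2 ∧ mmax x.2 ∉ x.1 ∧ 0 < mmax x.2) := by
    rintro ⟨D, μ⟩ ha
    obtain ⟨h1, h2, h3⟩ := (memS _).1 ha
    dsimp only at h1 h2 h3 ⊢
    constructor
    · intro hc
      have hDne : D.Nonempty := by
        rcases Finset.eq_empty_or_nonempty D with rfl | h
        · exfalso
          have hμ : μ ≠ 0 := by rintro rfl; simp at h3; omega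
          have hin := le_mmax (mmax_mem hμ)
          have hpos := h2 _ (mmax_mem hμ)
          have : fmax (∅ : Finset ℕ) = 0 := by simp [fmax]
          omega
        · exact h
      exact ⟨hDne, fmax_mem hDne, h1 _ (fmax_mem hDne)⟩
    · intro hc
      have hμ : μ ≠ 0 := by
        rintro rfl
        have : mmax (0 : Multiset ℕ) = 0 := by simp [mmax, fmax]
        omega
      refine ⟨mmax_mem hμ, fun hin => ?_, h2 _ (mmax_mem hμ)⟩
      exact absurd (le_fmax hin) (by omega)
  apply Finset.sum_involution
    (g := fun x _ => if mmax x.2 ≤ fmax x.1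
      then ⟨x.1.erase (fmax x.1), (fmax x.1) ::ₘ x.2⟩
      else ⟨insert (mmax x.2) x.1, x.2.erase (mmax x.2)⟩)
  case hg₁ =>
    rintro ⟨D, μ⟩ ha
    obtain ⟨k1, k2⟩ := key _ ha
    dsimp only at k1 k2 ⊢
    split_ifs with hc
    · obtain ⟨hDne, hmem, -⟩ := k1 hc
      dsimp only
      rw [Finset.card_erase_of_mem hmem]
      obtain ⟨c, hcard⟩ : ∃ c, D.card = c + 1 :=
        ⟨D.card - 1, by have := Finset.card_pos.2 hDne; omega⟩
      rw [hcard]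
      simp [pow_succ]
    · obtain ⟨hmem, hnin, -⟩ := k2 (by omega)
      dsimp only
      rw [Finset.card_insert_of_notMem hnin]
      simp [pow_succ]
  case hg₃ =>
    rintro ⟨D, μ⟩ ha -
    obtain ⟨k1, k2⟩ := key _ ha
    dsimp only at k1 k2 ⊢
    split_ifs with hc
    · obtain ⟨hDne, hmem, -⟩ := k1 hc
      intro h
      have h1 : D.erase (fmax D) = D := congrArg Sigma.fst h
      exact (Finset.erase_ne_self.2 hmem) h1
    · obtain ⟨hmem, hnin, -⟩ := k2 (by omega)
      intro h
      have h1 : insert (mmax μ) D = D := congrArg Sigma.fst h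
      exact hnin (h1 ▸ Finset.mem_insert_self _ _)
  case g_mem =>
    rintro ⟨D, μ⟩ ha
    obtain ⟨h1, h2, h3⟩ := (memS _).1 ha
    obtain ⟨k1, k2⟩ := key _ ha
    dsimp only at h1 h2 h3 k1 k2 ⊢
    split_ifs with hc
    · obtain ⟨hDne, hmem, hpos⟩ := k1 hc
      rw [memS]
      have hsum : (D.erase (fmax D)).sum id + fmax D = D.sum id :=
        Finset.sum_erase_add _ _ hmem
      refine ⟨fun y hy => h1 _ (Finset.mem_of_mem_erase hy), ?_, ?_⟩
      · intro y hy
        rcases Multiset.mem_cons.1 hy with rfl | hy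
        · exact hpos
        · exact h2 _ hy
      · dsimp only
        rw [Multiset.sum_cons]
        omega
    · obtain ⟨hmem, hnin, hpos⟩ := k2 (by omega)
      rw [memS]
      have hsum : (mmax μ) + (μ.erase (mmax μ)).sum = μ.sum := by
        conv_rhs => rw [← Multiset.cons_erase hmem]
        rw [Multiset.sum_cons]
      refine ⟨?_, fun y hy => h2 _ (Multiset.mem_of_mem_erase hy), ?_⟩
      · intro y hy
        rcases Finset.mem_insert.1 hy with rfl | hy
        · exact hpos
        · exact h1 _ hy
      · dsimp only
        have e : (insert (mmax μ) D).sum id = mmax μ + D.sum id := by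
          rw [Finset.sum_insert hnin]; rfl
        omega
  case hg₄ =>
    rintro ⟨D, μ⟩ ha
    obtain ⟨k1, k2⟩ := key _ ha
    dsimp only at k1 k2 ⊢
    by_cases hc : mmax μ ≤ fmax D
    · rw [if_pos hc]
      obtain ⟨hDne, hmem, hpos⟩ := k1 hc
      dsimp only
      have hb : mmax ((fmax D) ::ₘ μ) = fmax D := by
        apply le_antisymm
        · apply mmax_le
          intro x hx
          rcases Multiset.mem_cons.1 hx with rfl | hx
          · exact le_rfl
          · exact le_trans (le_mmax hx) hc
        · exact le_mmax (Multiset.mem_cons_self _ _)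
      have ha2 : fmax (D.erase (fmax D)) < fmax D := by
        have : fmax (D.erase (fmax D)) ≤ fmax D - 1 := by
          apply fmax_le
          intro x hx
          have h1 := Finset.ne_of_mem_erase hx
          have h2 := le_fmax (Finset.mem_of_mem_erase hx)
          omega
        omega
      rw [if_neg (by omega : ¬ (mmax ((fmax D) ::ₘ μ) ≤ fmax (D.erase (fmax D))))]
      rw [hb, Finset.insert_erase hmem, Multiset.erase_cons_head]
    · rw [if_neg hc]
      obtain ⟨hmem, hnin, hpos⟩ := k2 (by omega)
      dsimp only
      have ha2 : fmax (insert (mmax μ) D) = mmax μ := by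
        apply fmax_eq (Finset.mem_insert_self _ _)
        intro x hx
        rcases Finset.mem_insert.1 hx with rfl | hx
        · exact le_rfl
        · exact le_trans (le_fmax hx) (by omega)
      have hb : mmax (μ.erase (mmax μ)) ≤ mmax μ := by
        apply mmax_le
        intro x hx
        exact le_mmax (Multiset.mem_of_mem_erase hx)
      rw [if_pos (by omega : mmax (μ.erase (mmax μ)) ≤ fmax (insert (mmax μ) D))]
      rw [ha2, Finset.erase_insert hnin, Multiset.cons_erase hmem]




-- new definitions
noncomputable def Kn (n : ℕ) : Finset ℤ := (Finset.Icc (-(n:ℤ)) n).filter (fun k => pent k ≤ (n:ℤ))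

noncomputable def Fixset (n : ℕ) : Finset (Finset ℕ) := (Kn n).image staircase

lemma staircase_mem_Fixset {n : ℕ} {k : ℤ} (hk : pent k ≤ (n:ℤ)) : staircase k ∈ Fixset n := by
  apply Finset.mem_image_of_mem
  rw [Kn, Finset.mem_filter, Finset.mem_Icc]
  have := natAbs_le_pent k
  refine ⟨⟨by omega, by omega⟩, hk⟩

lemma mem_Fixset {n : ℕ} {D : Finset ℕ} (h : D ∈ Fixset n) :
    ∃ k, pent k ≤ (n:ℤ) ∧ D = staircase k := by
  obtain ⟨k, hk, rfl⟩ := Finset.mem_image.1 h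
  exact ⟨k, (Finset.mem_filter.1 hk).2, rfl⟩

lemma empty_mem_Fixset (n : ℕ) : (∅ : Finset ℕ) ∈ Fixset n := by
  have h : staircase 0 = (∅ : Finset ℕ) := by
    rw [staircase, if_pos le_rfl]
    simp
  have : pent 0 ≤ (n:ℤ) := by
    have := pent_nonneg 0
    have h0 : pent 0 = 0 := by rw [pent]; norm_num
    omega
  rw [← h]; exact staircase_mem_Fixset this

lemma staircase_sum_le {n : ℕ} {k : ℤ} (hk : pent k ≤ (n:ℤ)) : (staircase k).sum id ≤ n := by
  have := staircase_sum k; omega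

lemma Fixset_subset_DD (n : ℕ) : Fixset n ⊆ DD n := by
  intro D hD
  obtain ⟨k, hk, rfl⟩ := mem_Fixset hD
  exact mem_DD.2 ⟨fun x hx => staircase_pos hx, staircase_sum_le hk⟩

noncomputable def NonFix (n : ℕ) : Finset (Finset ℕ) := DD n \ Fixset n

def condA (D : Finset ℕ) : Prop := Finset.Icc (fmax D + 1 - fmin D) (fmax D) ⊆ D

instance : DecidablePred condA := fun D => by unfold condA; infer_instance

def franklin (D : Finset ℕ) : Finset ℕ :=
  if condA D then insert (fmax D + 1) ((D.erase (fmin D)).erase (fmax D + 1 - fmin D))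
  else insert (fmax D - gap D) (insert (gap D) (D.erase (fmax D)))

lemma lemA {n : ℕ} {D : Finset ℕ} (hDD : D ∈ DD n) (hFix : D ∉ Fixset n) (hc : condA D) :
    franklin D ∈ DD n ∧ franklin D ∉ Fixset n ∧ ¬ condA (franklin D) ∧
      franklin (franklin D) = D ∧ (franklin D).card + 1 = D.card ∧
      (franklin D).sum id = D.sum id := by
  obtain ⟨hpos, hsle⟩ := mem_DD.1 hDD
  have hne : D.Nonempty := by
    rcases Finset.eq_empty_or_nonempty D with rfl | h
    · exact absurd (empty_mem_Fixset n) hFix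
    · exact h
  set a := fmax D with ha
  set s := fmin D with hs
  have ha_mem : a ∈ D := fmax_mem hne
  have hs_mem : s ∈ D := fmin_mem hne
  have hs_pos : 0 < s := hpos _ hs_mem
  have hsa : s ≤ a := le_fmax hs_mem
  have hrun : Finset.Icc (a + 1 - s) a ⊆ D := hc
  -- 2s ≤ a
  have h2s : 2 * s ≤ a := by
    by_contra h2s
    have hDIcc : D = Finset.Icc s a := by
      apply Finset.Subset.antisymm
      · intro x hx
        exact Finset.mem_Icc.2 ⟨fmin_le hx, le_fmax hx⟩
      · intro x hx
        rw [Finset.mem_Icc] at hx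
        rcases le_or_gt (a + 1 - s) x with h | h
        · exact hrun (Finset.mem_Icc.2 ⟨h, hx.2⟩)
        · omega
    have hmm : a + 1 - s ∈ D := hrun (Finset.mem_Icc.2 ⟨le_rfl, by omega⟩)
    have : s ≤ a + 1 - s := fmin_le hmm
    have haval : a = 2 * s - 1 := by omega
    have hstair : D = staircase (-(s : ℤ)) := by
      rw [staircase, if_neg (by omega : ¬ (0:ℤ) ≤ -(s:ℤ))]
      rw [hDIcc, haval]
      congr 1 <;> omega
    apply hFix
    rw [hstair]
    apply staircase_mem_Fixset
    have := staircase_sum (-(s:ℤ))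
    rw [← hstair] at this
    omega
  have hsa2 : s < a + 1 - s := by omega
  have hm_mem : a + 1 - s ∈ D := hrun (Finset.mem_Icc.2 ⟨le_rfl, by omega⟩)
  have hm_meme : a + 1 - s ∈ D.erase s := Finset.mem_erase.2 ⟨by omega, hm_mem⟩
  set X := (D.erase s).erase (a + 1 - s) with hX
  have hXsub : X ⊆ D := fun x hx => Finset.mem_of_mem_erase (Finset.mem_of_mem_erase hx)
  have ha1X : a + 1 ∉ X := fun h => by have := le_fmax (hXsub h); omega
  have hfr : franklin D = insert (a + 1) X := by rw [franklin, if_pos hc]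
  set D' := insert (a + 1) X with hD'
  -- cardinality
  have hcard2 : 2 ≤ D.card := Finset.one_lt_card.2 ⟨s, hs_mem, a + 1 - s, hm_mem, by omega⟩
  have hcardX : X.card + 2 = D.card := by
    rw [hX, Finset.card_erase_of_mem hm_meme, Finset.card_erase_of_mem hs_mem]
    omega
  have hcardD' : D'.card + 1 = D.card := by
    rw [hD', Finset.card_insert_of_notMem ha1X]; omega
  -- sums
  have hsum1 : X.sum id + (a + 1 - s) = (D.erase s).sum id := by
    exact Finset.sum_erase_add (D.erase s) id hm_meme
  have hsum2 : (D.erase s).sum id + s = D.sum id := by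
    exact Finset.sum_erase_add D id hs_mem
  have hsum3 : D'.sum id = (a + 1) + X.sum id := by
    rw [hD', Finset.sum_insert ha1X]; rfl
  have hsumD' : D'.sum id = D.sum id := by omega
  -- membership properties of D'
  have hD'mem : ∀ x, x ∈ D' ↔ (x = a + 1 ∨ x ∈ X) := by
    intro x; rw [hD', Finset.mem_insert]
  have hposD' : ∀ x ∈ D', 0 < x := by
    intro x hx
    rcases (hD'mem x).1 hx with rfl | hx
    · omega
    · exact hpos _ (hXsub hx)
  have hD'DD : D' ∈ DD n := mem_DD.2 ⟨hposD', by omega⟩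
  have hD'ne : D'.Nonempty := ⟨a + 1, (hD'mem _).2 (Or.inl rfl)⟩
  have hfmaxD' : fmax D' = a + 1 := by
    apply fmax_eq ((hD'mem _).2 (Or.inl rfl))
    intro x hx
    rcases (hD'mem x).1 hx with rfl | hx
    · omega
    · have := le_fmax (hXsub hx); omega
  have hgtD' : ∀ x ∈ D', s < x := by
    intro x hx
    rcases (hD'mem x).1 hx with rfl | hx
    · omega
    · have h1 : x ∈ D.erase s := Finset.mem_of_mem_erase hx
      have h2 := Finset.ne_of_mem_erase h1
      have h3 := fmin_le (Finset.mem_of_mem_erase h1)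
      omega
  have hfminD' : s < fmin D' := hgtD' _ (fmin_mem hD'ne)
  have hnotin : a + 1 - s ∉ D' := by
    intro h
    rcases (hD'mem _).1 h with h | h
    · omega
    · exact Finset.notMem_erase _ _ h
  -- ¬ condA D'
  have hnc : ¬ condA D' := by
    intro hcon
    apply hnotin
    apply hcon
    rw [hfmaxD'] at *
    exact Finset.mem_Icc.2 ⟨by omega, by omega⟩
  -- D' not fixed
  have hnF : D' ∉ Fixset n := by
    intro hmemF
    obtain ⟨k, hk, hDk⟩ := mem_Fixset hmemF
    have hk0 : k ≠ 0 := by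
      intro h
      rw [h] at hDk
      have : a + 1 ∈ staircase (0:ℤ) := by rw [← hDk]; exact (hD'mem _).2 (Or.inl rfl)
      rw [staircase, if_pos le_rfl] at this
      simp at this
    obtain ⟨u, v, hIcc, hu1, hv, hun, hun2⟩ := staircase_shape k hk0
    rw [← hDk] at hIcc
    have hcardk : D'.card = k.natAbs := by rw [hDk, staircase_card]
    have huv : u ≤ v := by
      have := hD'ne
      rw [hIcc] at this
      obtain ⟨x, hx⟩ := this
      rw [Finset.mem_Icc] at hx
      omega
    have hvmax : v = a + 1 := by
      have : fmax D' = v := by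
        apply fmax_eq
        · rw [hIcc]; exact Finset.mem_Icc.2 ⟨huv, le_rfl⟩
        · intro x hx; rw [hIcc, Finset.mem_Icc] at hx; omega
      omega
    have hmiss : a + 1 - s < u := by
      by_contra h
      apply hnotin
      rw [hIcc]
      exact Finset.mem_Icc.2 ⟨by omega, by omega⟩
    -- card bound on D
    have htb : D.card ≤ a + 1 - s := by
      have hsub : D ⊆ Finset.Icc s a := fun x hx => Finset.mem_Icc.2 ⟨fmin_le hx, le_fmax hx⟩
      have := Finset.card_le_card hsub
      rw [Nat.card_Icc] at this
      omega
    omega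
  rw [hfr]
  refine ⟨hD'DD, hnF, hnc, ?_, hcardD', hsumD'⟩
  -- franklin D' = D
  have h0D' : 0 ∉ D' := fun h => by have := hposD' _ h; omega
  have hgap : gap D' = a + 1 - s := by
    apply gap_eq hD'ne h0D' hnotin (by omega)
    intro x hx1 hx2
    rw [hfmaxD'] at hx2
    rcases eq_or_lt_of_le hx2 with rfl | hlt
    · exact (hD'mem _).2 (Or.inl rfl)
    · apply (hD'mem _).2
      right
      rw [hX]
      refine Finset.mem_erase.2 ⟨by omega, Finset.mem_erase.2 ⟨by omega, ?_⟩⟩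
      exact hrun (Finset.mem_Icc.2 ⟨by omega, by omega⟩)
  rw [franklin, if_neg hnc, hgap, hfmaxD']
  rw [show a + 1 - (a + 1 - s) = s from by omega]
  rw [hD', Finset.erase_insert ha1X]
  rw [hX, Finset.insert_erase hm_meme, Finset.insert_erase hs_mem]

lemma lemB {n : ℕ} {D : Finset ℕ} (hDD : D ∈ DD n) (hFix : D ∉ Fixset n) (hc : ¬ condA D) :
    franklin D ∈ DD n ∧ franklin D ∉ Fixset n ∧ condA (franklin D) ∧
      franklin (franklin D) = D ∧ (franklin D).card = D.card + 1 ∧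
      (franklin D).sum id = D.sum id := by
  obtain ⟨hpos, hsle⟩ := mem_DD.1 hDD
  have hne : D.Nonempty := by
    rcases Finset.eq_empty_or_nonempty D with rfl | h
    · exact absurd (empty_mem_Fixset n) hFix
    · exact h
  set a := fmax D with ha
  set s := fmin D with hs
  have ha_mem : a ∈ D := fmax_mem hne
  have hs_mem : s ∈ D := fmin_mem hne
  have hs_pos : 0 < s := hpos _ hs_mem
  have hsa : s ≤ a := le_fmax hs_mem
  have h0D : 0 ∉ D := fun h => by have := hpos _ h; omega
  obtain ⟨hg1, hg2, hg3⟩ := gap_spec hne h0D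
  set g := gap D with hgdef
  have hsg : s ≤ g + 1 := fmin_le (hg3 (g+1) (by omega) (by omega))
  have hslt : a - g < s := by
    by_contra h
    apply hc
    intro x hx
    rw [Finset.mem_Icc] at hx
    exact hg3 x (by omega) (by omega)
  have hgpos : 1 ≤ g := by omega
  set σ := a - g with hσdef
  have hσpos : 1 ≤ σ := by omega
  have hσg : σ ≠ g := by
    intro heq
    have hDIcc : D = Finset.Icc (g+1) a := by
      apply Finset.Subset.antisymm
      · intro x hx
        have h1 := fmin_le hx
        have h2 := le_fmax hx
        exact Finset.mem_Icc.2 ⟨by omega, h2⟩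
      · intro x hx
        rw [Finset.mem_Icc] at hx
        exact hg3 x (by omega) hx.2
    have hstair : D = staircase (g : ℤ) := by
      rw [staircase, if_pos (by positivity)]
      rw [hDIcc]
      congr 1 <;> simp <;> omega
    apply hFix
    rw [hstair]
    apply staircase_mem_Fixset
    have := staircase_sum (g:ℤ)
    rw [← hstair] at this
    omega
  have hσltg : σ < g := by omega
  have hσnin : σ ∉ D := fun h => by have := fmin_le h; omega
  have hgnin' : g ∉ D.erase a := fun h => hg1 (Finset.mem_of_mem_erase h)
  have hσnin2 : σ ∉ insert g (D.erase a) := by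
    intro h
    rcases Finset.mem_insert.1 h with h | h
    · omega
    · exact hσnin (Finset.mem_of_mem_erase h)
  have hfr : franklin D = insert σ (insert g (D.erase a)) := by
    rw [franklin, if_neg hc]
  set D' := insert σ (insert g (D.erase a)) with hD'
  have hD'mem : ∀ x, x ∈ D' ↔ (x = σ ∨ x = g ∨ (x ∈ D ∧ x ≠ a)) := by
    intro x
    rw [hD', Finset.mem_insert, Finset.mem_insert, Finset.mem_erase]
    tauto
  -- cardinality
  have hcardD' : D'.card = D.card + 1 := by
    rw [hD', Finset.card_insert_of_notMem hσnin2, Finset.card_insert_of_notMem hgnin',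
      Finset.card_erase_of_mem ha_mem]
    have : 1 ≤ D.card := Finset.card_pos.2 hne
    omega
  -- sums
  have hsum1 : (D.erase a).sum id + a = D.sum id := Finset.sum_erase_add D id ha_mem
  have hsum2 : (insert g (D.erase a)).sum id = g + (D.erase a).sum id := by
    rw [Finset.sum_insert hgnin']; rfl
  have hsum3 : D'.sum id = σ + (insert g (D.erase a)).sum id := by
    rw [hD', Finset.sum_insert hσnin2]; rfl
  have hsumD' : D'.sum id = D.sum id := by omega
  have hposD' : ∀ x ∈ D', 0 < x := by
    intro x hx
    rcases (hD'mem x).1 hx with rfl | rfl | ⟨h, -⟩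
    · omega
    · omega
    · exact hpos _ h
  have hD'DD : D' ∈ DD n := mem_DD.2 ⟨hposD', by omega⟩
  have hD'ne : D'.Nonempty := ⟨σ, (hD'mem _).2 (Or.inl rfl)⟩
  have hfmaxD' : fmax D' = a - 1 := by
    apply fmax_eq
    · rcases eq_or_lt_of_le (show g ≤ a - 1 from by omega) with heq | hlt
      · exact (hD'mem _).2 (Or.inr (Or.inl heq.symm))
      · exact (hD'mem _).2 (Or.inr (Or.inr ⟨hg3 (a-1) (by omega) (by omega), by omega⟩))
    · intro x hx
      rcases (hD'mem x).1 hx with rfl | rfl | ⟨h, hne2⟩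
      · omega
      · omega
      · have := le_fmax h; omega
  have hfminD' : fmin D' = σ := by
    apply fmin_eq ((hD'mem _).2 (Or.inl rfl))
    intro x hx
    rcases (hD'mem x).1 hx with rfl | rfl | ⟨h, -⟩
    · omega
    · omega
    · have := fmin_le h; omega
  have hcA : condA D' := by
    rw [condA, hfmaxD', hfminD']
    intro x hx
    rw [Finset.mem_Icc] at hx
    have hxl : g ≤ x := by omega
    rcases eq_or_lt_of_le hxl with heq | hlt
    · exact (hD'mem _).2 (Or.inr (Or.inl heq.symm))
    · exact (hD'mem _).2 (Or.inr (Or.inr ⟨hg3 x (by omega) (by omega), by omega⟩))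
  have hnF : D' ∉ Fixset n := by
    intro hmemF
    obtain ⟨k, hk, hDk⟩ := mem_Fixset hmemF
    have hk0 : k ≠ 0 := by
      intro h
      rw [h] at hDk
      have : σ ∈ staircase (0:ℤ) := by rw [← hDk]; exact (hD'mem _).2 (Or.inl rfl)
      rw [staircase, if_pos le_rfl] at this
      simp at this
    obtain ⟨u, v, hIcc, hu1, hv, hun, hun2⟩ := staircase_shape k hk0
    rw [← hDk] at hIcc
    have hcardk : D'.card = k.natAbs := by rw [hDk, staircase_card]
    have huv : u ≤ v := by
      have := hD'ne
      rw [hIcc] at this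
      obtain ⟨x, hx⟩ := this
      rw [Finset.mem_Icc] at hx
      omega
    have humin : fmin D' = u := by
      apply fmin_eq
      · rw [hIcc]; exact Finset.mem_Icc.2 ⟨le_rfl, huv⟩
      · intro x hx; rw [hIcc, Finset.mem_Icc] at hx; omega
    -- σ ≤ card D - 1 : run Icc (g+1) a ⊆ D
    have hrunsub : Finset.Icc (g+1) a ⊆ D := by
      intro x hx
      rw [Finset.mem_Icc] at hx
      exact hg3 x (by omega) hx.2
    have hσcard : σ ≤ D.card := by
      have := Finset.card_le_card hrunsub
      rw [Nat.card_Icc] at this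
      omega
    omega
  rw [hfr]
  refine ⟨hD'DD, hnF, hcA, ?_, hcardD', hsumD'⟩
  -- franklin D' = D
  rw [franklin, if_pos hcA, hfmaxD', hfminD']
  rw [show a - 1 + 1 = a from by omega, show a - σ = g from by omega]
  rw [hD', Finset.erase_insert hσnin2, Finset.erase_insert hgnin', Finset.insert_erase ha_mem]

theorem franklin_involution (n : ℕ) :
    ∑ D ∈ NonFix n, (-1 : ℤ) ^ D.card * (p (n - D.sum id) : ℤ) = 0 := by
  apply Finset.sum_involution (g := fun D _ => franklin D)
  case hg₁ =>
    intro D hD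
    rw [NonFix, Finset.mem_sdiff] at hD
    by_cases hc : condA D
    · obtain ⟨-, -, -, -, hcard, hsum⟩ := lemA hD.1 hD.2 hc
      rw [hsum, ← hcard, pow_succ]
      ring
    · obtain ⟨-, -, -, -, hcard, hsum⟩ := lemB hD.1 hD.2 hc
      rw [hsum, hcard, pow_succ]
      ring
  case hg₃ =>
    intro D hD _hne
    rw [NonFix, Finset.mem_sdiff] at hD
    intro h
    by_cases hc : condA D
    · obtain ⟨-, -, -, -, hcard, -⟩ := lemA hD.1 hD.2 hc
      rw [h] at hcard; omega
    · obtain ⟨-, -, -, -, hcard, -⟩ := lemB hD.1 hD.2 hc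
      rw [h] at hcard; omega
  case g_mem =>
    intro D hD
    rw [NonFix, Finset.mem_sdiff] at hD
    rw [NonFix, Finset.mem_sdiff]
    by_cases hc : condA D
    · obtain ⟨h1, h2, -⟩ := lemA hD.1 hD.2 hc
      exact ⟨h1, h2⟩
    · obtain ⟨h1, h2, -⟩ := lemB hD.1 hD.2 hc
      exact ⟨h1, h2⟩
  case hg₄ =>
    intro D hD
    rw [NonFix, Finset.mem_sdiff] at hD
    by_cases hc : condA D
    · exact (lemA hD.1 hD.2 hc).2.2.2.1
    · exact (lemB hD.1 hD.2 hc).2.2.2.1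


end ER

namespace ER

theorem euler_recurrence_aux (n : ℕ) (hn : 1 ≤ n) :
    ∑ k ∈ Finset.Icc (-(n : ℤ)) (n : ℤ), (-1 : ℤ) ^ k.natAbs * pZ ((n : ℤ) - pent k) = 0 := by
  have hsplit := Finset.sum_filter_add_sum_filter_not (Finset.Icc (-(n:ℤ)) (n:ℤ))
    (fun k => pent k ≤ (n:ℤ)) (fun k => (-1 : ℤ) ^ k.natAbs * pZ ((n : ℤ) - pent k))
  have hz : ∑ k ∈ (Finset.Icc (-(n:ℤ)) (n:ℤ)).filter (fun k => ¬ pent k ≤ (n:ℤ)),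
      (-1 : ℤ) ^ k.natAbs * pZ ((n : ℤ) - pent k) = 0 := by
    apply Finset.sum_eq_zero
    intro k hk
    rw [Finset.mem_filter] at hk
    rw [pZ, if_neg (by have := hk.2; omega)]
    ring
  have h1 : ∑ k ∈ Kn n, (-1:ℤ) ^ k.natAbs * pZ ((n:ℤ) - pent k)
      = ∑ k ∈ Kn n, (-1:ℤ) ^ ((staircase k).card) * (p (n - (staircase k).sum id) : ℤ) := by
    apply Finset.sum_congr rfl
    intro k hk
    have hk2 : pent k ≤ (n:ℤ) := (Finset.mem_filter.1 hk).2
    have hsum := staircase_sum k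
    have hnn := pent_nonneg k
    have harg : ((n:ℤ) - pent k).toNat = n - (staircase k).sum id := by omega
    rw [staircase_card, pZ, if_pos (by omega), harg]
  have h2 : ∑ k ∈ Kn n, (-1:ℤ) ^ ((staircase k).card) * (p (n - (staircase k).sum id) : ℤ)
      = ∑ D ∈ Fixset n, (-1:ℤ) ^ D.card * (p (n - D.sum id) : ℤ) := by
    rw [Fixset, Finset.sum_image]
    intro x hx y hy h
    apply pent_inj
    rw [← staircase_sum x, ← staircase_sum y, h]
  have h3 : (∑ D ∈ NonFix n, (-1:ℤ) ^ D.card * (p (n - D.sum id) : ℤ))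
      + ∑ D ∈ Fixset n, (-1:ℤ) ^ D.card * (p (n - D.sum id) : ℤ)
      = ∑ D ∈ DD n, (-1:ℤ) ^ D.card * (p (n - D.sum id) : ℤ) :=
    Finset.sum_sdiff (Fixset_subset_DD n)
  have hK : (Finset.Icc (-(n:ℤ)) (n:ℤ)).filter (fun k => pent k ≤ (n:ℤ)) = Kn n := rfl
  rw [← hsplit, hz, add_zero, hK, h1, h2]
  have he := easy_involution n hn
  have hf := franklin_involution n
  omega

end ER

/-- Euler's recurrence: for every positive `n`,
`∑_k (-1)^k p(n - ω(k)) = 0`, the sum being over all integers `k` with `ω(k) ≤ n`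
(equivalently, over `|k| ≤ n`, since the remaining terms vanish). -/
theorem euler_recurrence (n : ℕ) (hn : 1 ≤ n) :
    ∑ k ∈ Finset.Icc (-(n : ℤ)) (n : ℤ), (-1 : ℤ) ^ k.natAbs * pZ ((n : ℤ) - pent k) = 0 :=
  ER.euler_recurrence_aux n hn
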